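/- For every d > 1 and all integers n ≥ m > 0, there exist finite families P⁻ of m points and P⁺ of n points in ℝ^d such that for every unit vector w ∈ ℝ^d, after projecting all points along w there exists a linear classifier making at most ⌈m/d⌉ misclassifications; that is, there exist a nonzero vector v ∈ ℝ^d and c ∈ ℝ such that the number of indices i with ⟪π_w(P⁻ i), v⟫ ≥ c plus the number of indices j with ⟪π_w(P⁺ j), v⟫ < c is at most ⌈m/d⌉. -/

import Mathlib

open scoped InnerProductSpace
open scoped Classical

/-- Projection of a point `p` along the vector `w`. -/
noncomputable def proj {d : ℕ} (w p : EuclideanSpace ℝ (Fin d)) : EuclideanSpace ℝ (Fin d) :=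
  p - (⟪p, w⟫_ℝ / ‖w‖ ^ 2) • w

lemma fiber_card_le (m d : ℕ) (hd : 0 < d) (hm : 0 < m) (k : ℕ) :
    (Finset.univ.filter (fun i : Fin m => i.val % d = k)).card ≤ (m + d - 1) / d := by
  have h1 : (m + d - 1) / d = (m - 1) / d + 1 := by
    have : m + d - 1 = (m - 1) + d := by omega
    rw [this, Nat.add_div_right _ hd]
  rw [h1, ← Finset.card_range ((m - 1) / d + 1)]
  apply Finset.card_le_card_of_injOn (fun i => i.val / d)
  · intro i hi
    simp only [Finset.mem_coe, Finset.mem_range]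
    have : i.val ≤ m - 1 := by omega
    have := Nat.div_le_div_right (c := d) this
    omega
  · intro i hi j hj hij
    simp only [Finset.mem_coe, Finset.mem_filter] at hi hj
    apply Fin.ext
    have hij' : i.val / d = j.val / d := hij
    calc i.val = d * (i.val / d) + i.val % d := (Nat.div_add_mod _ _).symm
      _ = d * (j.val / d) + j.val % d := by rw [hij', hi.2, hj.2]
      _ = j.val := Nat.div_add_mod _ _

theorem misclassification_upper_bound (d : ℕ) (hd : 1 < d) (m n : ℕ) (hm : 0 < m) (hmn : m ≤ n) :
    ∃ Pm : Fin m → EuclideanSpace ℝ (Fin d),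
    ∃ Pp : Fin n → EuclideanSpace ℝ (Fin d),
      ∀ w : EuclideanSpace ℝ (Fin d), ‖w‖ = 1 →
        ∃ v : EuclideanSpace ℝ (Fin d), v ≠ 0 ∧ ∃ c : ℝ,
          (Finset.univ.filter fun i => c ≤ ⟪proj w (Pm i), v⟫_ℝ).card +
          (Finset.univ.filter fun j => ⟪proj w (Pp j), v⟫_ℝ < c).card ≤ (m + d - 1) / d := by
  have hd0 : 0 < d := by omega
  -- group map
  set g : Fin m → Fin d := fun i => ⟨i.val % d, Nat.mod_lt _ hd0⟩ with hg
  refine ⟨fun i => -(EuclideanSpace.single (g i) (1 : ℝ)), fun _ => 0, ?_⟩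
  intro w hw
  have hwne : w ≠ 0 := by
    intro h; rw [h, norm_zero] at hw; norm_num at hw
  -- pick k with w k ≠ 0
  have hk : ∃ k : Fin d, w k ≠ 0 := by
    by_contra h
    push_neg at h
    apply hwne
    ext k; simpa using h k
  obtain ⟨k, hk⟩ := hk
  -- define v
  set S : ℝ := ∑ j ∈ Finset.univ.erase k, w j with hS
  set v : EuclideanSpace ℝ (Fin d) := WithLp.toLp 2 (fun j => if j = k then -S / w k else 1) with hv
  have hvk : ∀ j, j ≠ k → v j = 1 := by
    intro j hj; simp [hv, hj]
  -- v ≠ 0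
  obtain ⟨j0, hj0⟩ : ∃ j0 : Fin d, j0 ≠ k := by
    have : Nontrivial (Fin d) := Fin.nontrivial_iff_two_le.mpr hd
    exact exists_ne k
  have hvne : v ≠ 0 := by
    intro h
    have : v j0 = (0 : EuclideanSpace ℝ (Fin d)) j0 := by rw [h]
    rw [hvk j0 hj0] at this
    simpa using this
  -- ⟪w, v⟫ = 0
  have hwv : ⟪w, v⟫_ℝ = 0 := by
    rw [PiLp.inner_apply]
    simp only [RCLike.inner_apply, conj_trivial]
    rw [← Finset.add_sum_erase _ _ (Finset.mem_univ k)]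
    have h1 : w k * v k = -S := by
      simp only [hv, PiLp.toLp_apply, if_pos rfl, ↓reduceIte]
      field_simp
    have h2 : ∑ j ∈ Finset.univ.erase k, w j * v j = S := by
      rw [hS]
      apply Finset.sum_congr rfl
      intro j hj
      rw [hvk j (Finset.ne_of_mem_erase hj), mul_one]
    rw [mul_comm, Finset.sum_congr rfl (fun x _ => mul_comm (v x) (w x)), h1, h2]; ring
  -- inner with projection equals inner with point
  have hproj : ∀ p : EuclideanSpace ℝ (Fin d), ⟪proj w p, v⟫_ℝ = ⟪p, v⟫_ℝ := by
    intro p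
    unfold proj
    rw [inner_sub_left, real_inner_smul_left, hwv]
    ring
  refine ⟨v, hvne, 0, ?_⟩
  -- Pp side is empty
  have hPp : (Finset.univ.filter fun j : Fin n =>
      ⟪proj w (0 : EuclideanSpace ℝ (Fin d)), v⟫_ℝ < 0).card = 0 := by
    rw [Finset.card_eq_zero, Finset.filter_eq_empty_iff]
    intro j _
    rw [hproj, inner_zero_left]
    simp
  rw [hPp, add_zero]
  -- Pm side
  have hPm : (Finset.univ.filter fun i : Fin m =>
      (0:ℝ) ≤ ⟪proj w (-(EuclideanSpace.single (g i) (1:ℝ))), v⟫_ℝ) ⊆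
      Finset.univ.filter (fun i : Fin m => i.val % d = k.val) := by
    intro i hi
    simp only [Finset.mem_filter, Finset.mem_univ, true_and] at hi ⊢
    rw [hproj, inner_neg_left, EuclideanSpace.inner_single_left] at hi
    by_contra hne
    have hgik : g i ≠ k := by
      intro h; apply hne; rw [← h]
    rw [hvk (g i) hgik] at hi
    simp at hi
    linarith
  calc _ ≤ (Finset.univ.filter (fun i : Fin m => i.val % d = k.val)).card :=
        Finset.card_le_card hPm
    _ ≤ (m + d - 1) / d := fiber_card_le m d hd0 hm k.val
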